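/- In the basic Fraenkel permutation model (or, abstractly: for the set A of atoms with the full symmetric group acting, and any finite-to-one function f from S_n(A) to S_{n+1}(A) with finite support E, where n > 1): for every s ∈ S_n(A) with mov(s) ⊆ A \ E, one has mov(s) ⊆ mov(f(s)) ⊆ mov(s) ∪ E. Consequently no such equivariant finite-to-one f exists, i.e., it is consistent with ZF that S_n(A) admits no finite-to-one map to S_{n+1}(A) for all n > 1. -/

import Mathlib

private lemma conj_fix {A : Type*} (π σ : Equiv.Perm A)
    (h : ∀ x, π x = x ∨ σ x = x) : π * σ * π⁻¹ = σ := by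
  have hc : Commute π σ := Equiv.Perm.Disjoint.commute h
  rw [hc.eq, mul_inv_cancel_right]

private lemma moved_conj {A : Type*} (π σ : Equiv.Perm A) :
    {a | (π * σ * π⁻¹) a ≠ a} = π '' {a | σ a ≠ a} := by
  ext a
  simp only [Set.mem_setOf_eq, Equiv.Perm.mul_apply, Set.mem_image]
  constructor
  · intro h
    refine ⟨π⁻¹ a, fun hc => h (by rw [hc]; simp), by simp⟩
  · rintro ⟨x, hx, rfl⟩
    simp only [Equiv.Perm.inv_def, Equiv.symm_apply_apply]
    exact fun hc => hx (π.injective hc)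

/-- The support computation in the basic Fraenkel model, abstractly: if `n > 1`,
`A` is infinite, and `f` maps permutations moving exactly `n` points to permutations
moving exactly `n + 1` points, is finite-to-one on them, and is equivariant under all
permutations of `A` fixing a finite set `E` pointwise, then for every `s ∈ S_n(A)`
with support disjoint from `E` we have `mov(s) ⊆ mov(f s) ⊆ mov(s) ∪ E`, and in fact
no such `f` can exist (a contradiction follows). -/
theorem stmt_19 (A : Type*) [Infinite A] (n : ℕ) (hn : 1 < n)
    (E : Set A) (hE : E.Finite)
    (f : Equiv.Perm A → Equiv.Perm A)
    (hmaps : ∀ s : Equiv.Perm A, {a | s a ≠ a}.Finite → {a | s a ≠ a}.ncard = n →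
      {a | f s a ≠ a}.Finite ∧ {a | f s a ≠ a}.ncard = n + 1)
    (hfto : ∀ t : Equiv.Perm A,
      {s : Equiv.Perm A | {a | s a ≠ a}.Finite ∧ {a | s a ≠ a}.ncard = n ∧ f s = t}.Finite)
    (hequiv : ∀ π : Equiv.Perm A, (∀ e ∈ E, π e = e) →
      ∀ s : Equiv.Perm A, f (π * s * π⁻¹) = π * f s * π⁻¹) :
    (∀ s : Equiv.Perm A, {a | s a ≠ a}.Finite → {a | s a ≠ a}.ncard = n →
      Disjoint {a | s a ≠ a} E →
      {a | s a ≠ a} ⊆ {a | f s a ≠ a} ∧ {a | f s a ≠ a} ⊆ {a | s a ≠ a} ∪ E) ∧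
    False := by
  classical
  have hF : False := by
    -- construct s : an n-cycle on n atoms outside E
    obtain ⟨t, htE, htc⟩ := (hE.infinite_compl).exists_subset_card_eq n
    set l := t.toList with hl
    have hnd : l.Nodup := t.nodup_toList
    have hlen : l.length = n := by simp [hl, htc]
    set s := l.formPerm with hs
    set M := {a | s a ≠ a} with hMdef
    have hM : M = ↑t := by
      ext a
      simp only [hMdef, Set.mem_setOf_eq, Finset.coe_sort_coe, Finset.mem_coe]
      constructor
      · intro h
        have := List.mem_of_formPerm_apply_ne h
        simpa [hl] using this
      · intro h
        have hal : a ∈ l := by simpa [hl] using h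
        rw [hs, List.formPerm_apply_mem_ne_self_iff l hnd a hal, hlen]
        omega
    have hMfin : M.Finite := by rw [hM]; exact t.finite_toSet
    have hMn : M.ncard = n := by rw [hM]; simp [htc]
    have hMdisjE : Disjoint M E := by
      rw [hM, Set.disjoint_left]
      intro a ha haE
      exact htE ha haE
    have hsE : ∀ e ∈ E, s e = e := by
      intro e he
      by_contra h
      exact (Set.disjoint_left.mp hMdisjE) h he
    obtain ⟨hTfin, hTn⟩ := hmaps s hMfin hMn
    set T := {a | f s a ≠ a} with hTdef
    have sMinv : ∀ x, x ∈ M → s x ∈ M := by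
      intro x hx h
      exact hx (s.injective h)
    -- Upper bound: T ⊆ M ∪ E
    have hTsub : T ⊆ M ∪ E := by
      intro a ha
      by_contra haME
      have haM : a ∉ M := fun h => haME (Or.inl h)
      have haE : a ∉ E := fun h => haME (Or.inr h)
      obtain ⟨b, hb⟩ :=
        (((hMfin.union hE).union (hTfin.union (Set.finite_singleton a))).infinite_compl).nonempty
      simp only [Set.mem_compl_iff, Set.mem_union, Set.mem_singleton_iff, not_or] at hb
      obtain ⟨⟨hbM, hbE⟩, hbT, hba⟩ := hb
      set π := Equiv.swap a b with hπ
      have hπE : ∀ e ∈ E, π e = e := by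
        intro e he
        exact Equiv.swap_apply_of_ne_of_ne (fun h => haE (h ▸ he)) (fun h => hbE (h ▸ he))
      have hconj : π * s * π⁻¹ = s := by
        apply conj_fix
        intro x
        by_cases hx : x = a ∨ x = b
        · right
          rcases hx with rfl | rfl
          · by_contra h; exact haM h
          · by_contra h; exact hbM h
        · push_neg at hx
          left
          exact Equiv.swap_apply_of_ne_of_ne hx.1 hx.2
      have hkey := hequiv π hπE s
      rw [hconj] at hkey
      have hb2 : f s b = π (f s a) := by
        conv_lhs => rw [hkey]
        simp [Equiv.Perm.mul_apply, hπ]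
      have : f s b ≠ b := by
        rw [hb2]
        intro h
        apply ha
        have h2 : π (f s a) = π a := by rw [h, Equiv.swap_apply_left]
        exact π.injective h2
      exact hbT this
    -- Lower bound: M ⊆ T
    have hMT : M ⊆ T := by
      intro a haM
      by_contra haT
      have haE : a ∉ E := Set.disjoint_left.mp hMdisjE haM
      set C := ((M ∪ E) ∪ (T ∪ {a}))ᶜ with hC
      have hCinf : C.Infinite :=
        ((hMfin.union hE).union (hTfin.union (Set.finite_singleton a))).infinite_compl
      set g : A → Equiv.Perm A := fun b => Equiv.swap a b * s * (Equiv.swap a b)⁻¹ with hg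
      have hCmem : ∀ b ∈ C, b ∉ M ∧ b ∉ E ∧ b ∉ T ∧ b ≠ a := by
        intro b hb
        simp only [hC, Set.mem_compl_iff, Set.mem_union, Set.mem_singleton_iff, not_or] at hb
        exact ⟨hb.1.1, hb.1.2, hb.2.1, hb.2.2⟩
      have hmem : ∀ b ∈ C, g b ∈ {s' : Equiv.Perm A |
          {x | s' x ≠ x}.Finite ∧ {x | s' x ≠ x}.ncard = n ∧ f s' = f s} := by
        intro b hb
        obtain ⟨hbM, hbE, hbT, hba⟩ := hCmem b hb
        have hmov : {x | g b x ≠ x} = Equiv.swap a b '' M := moved_conj _ _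
        refine ⟨by rw [hmov]; exact hMfin.image _, by
          rw [hmov, Set.ncard_image_of_injective _ (Equiv.swap a b).injective, hMn], ?_⟩
        have hπE : ∀ e ∈ E, Equiv.swap a b e = e := by
          intro e he
          exact Equiv.swap_apply_of_ne_of_ne (fun h => haE (h ▸ he)) (fun h => hbE (h ▸ he))
        have := hequiv (Equiv.swap a b) hπE s
        rw [hg]
        rw [this]
        apply conj_fix
        intro x
        by_cases hx : x = a ∨ x = b
        · right
          rcases hx with rfl | rfl
          · by_contra h; exact haT h
          · by_contra h; exact hbT h
        · push_neg at hx
          left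
          exact Equiv.swap_apply_of_ne_of_ne hx.1 hx.2
      have hinj : Set.InjOn g C := by
        intro b hb b' hb' heq
        by_contra hne
        obtain ⟨hbM, hbE, hbT, hba⟩ := hCmem b hb
        obtain ⟨hb'M, hb'E, hb'T, hb'a⟩ := hCmem b' hb'
        have h1 : g b b = s a := by
          have hsa : s a ≠ a := haM
          have hsaM : s a ∈ M := sMinv a haM
          have hsab : s a ≠ b := fun h => hbM (h ▸ hsaM)
          simp only [hg, Equiv.Perm.mul_apply]
          rw [Equiv.swap_inv, Equiv.swap_apply_right]
          exact Equiv.swap_apply_of_ne_of_ne hsa hsab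
        have h2 : g b' b = b := by
          simp only [hg, Equiv.Perm.mul_apply]
          rw [Equiv.swap_inv, Equiv.swap_apply_of_ne_of_ne hba (Ne.symm (fun h => hne h.symm))]
          have hsb : s b = b := by by_contra h; exact hbM h
          rw [hsb, Equiv.swap_apply_of_ne_of_ne hba (Ne.symm (fun h => hne h.symm))]
        have : s a = b := by rw [← h1, heq, h2]
        exact hbM (this ▸ sMinv a haM)
      have hfiber : {s' : Equiv.Perm A |
          {x | s' x ≠ x}.Finite ∧ {x | s' x ≠ x}.ncard = n ∧ f s' = f s}.Infinite :=
        ((hCinf.image hinj).mono (Set.image_subset_iff.mpr hmem))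
      exact hfiber (hfto (f s))
    -- Get the extra point e ∈ E
    have hexe : ∃ e, e ∈ T \ M := by
      by_contra h
      push_neg at h
      have hTM : T ⊆ M := fun x hx => by
        by_contra hxM; exact (h x) ⟨hx, hxM⟩
      have := Set.ncard_le_ncard hTM hMfin
      omega
    obtain ⟨e, heT, heM⟩ := hexe
    have hTdM : (T \ M).ncard = 1 := by
      have := Set.ncard_diff_add_ncard_of_subset hMT hTfin
      omega
    obtain ⟨x, hx⟩ := Set.ncard_eq_one.mp hTdM
    have hxe : T \ M = {e} := by
      rw [hx]
      have : e ∈ ({x} : Set A) := hx ▸ (Set.mem_diff e).mpr ⟨heT, heM⟩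
      rw [Set.mem_singleton_iff] at this
      rw [this]
    -- f s commutes with s
    have hsc := hequiv s hsE s
    rw [show s * s * s⁻¹ = s by group] at hsc
    have hcomm : ∀ x, f s (s x) = s (f s x) := by
      intro x
      conv_lhs => rw [hsc]
      simp [Equiv.Perm.mul_apply]
    have hmaps' : Set.MapsTo (f s) M M := by
      intro x hx
      simp only [hMdef, Set.mem_setOf_eq] at hx ⊢
      intro h
      apply hx
      have : f s (s x) = f s x := by rw [hcomm, h]
      exact (f s).injective this
    have hbij : Set.BijOn (f s) M M :=
      (hMfin.injOn_iff_bijOn_of_mapsTo hmaps').mp ((f s).injective.injOn)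
    have hfeT : f s e ∈ T := by
      simp only [hTdef, Set.mem_setOf_eq]
      intro h
      exact heT ((f s).injective h)
    have hfeM : f s e ∈ M := by
      by_contra h
      have : f s e ∈ T \ M := ⟨hfeT, h⟩
      rw [hxe, Set.mem_singleton_iff] at this
      exact heT (by simpa [hTdef] using this)
    obtain ⟨m, hmM, hme⟩ := hbij.surjOn hfeM
    exact heM ((f s).injective hme ▸ hmM)
  exact ⟨fun _ _ _ _ => hF.elim, hF⟩
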